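/- Let F be a finite field with q elements, let V be an n-dimensional F-vector space and let W be a k-dimensional subspace of V with 0 ≤ k < n. Then the number of simple linear transformations T : W → V equals ∏_{i=1}^{k} (q^n − q^i). -/

import Mathlib

/-- A linear map `T : W → V` defined on a subspace `W` of `V` is *simple* if the only
`T`-invariant subspace properly contained in `V` is the zero subspace. A subspace `U` of `V`
is `T`-invariant if `U ⊆ W` and `T(U) ⊆ U`. -/
def IsSimple {F V : Type*} [Field F] [AddCommGroup V] [Module F V]
    (W : Submodule F V) (T : W →ₗ[F] V) : Prop :=
  ∀ U : Submodule F V, U ≤ W → (∀ x : W, (x : V) ∈ U → T x ∈ U) → U ≠ ⊤ → U = ⊥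

open Module Submodule

namespace SimpleCount

variable {F V : Type*} [Field F] [AddCommGroup V] [Module F V]

/-- invariance without the top proviso -/
def Inv (W : Submodule F V) (T : W →ₗ[F] V) (U : Submodule F V) : Prop :=
  ∀ x : W, (x : V) ∈ U → T x ∈ U

/-- simplicity without the top proviso -/
def Simp (W : Submodule F V) (T : W →ₗ[F] V) : Prop :=
  ∀ U : Submodule F V, U ≤ W → Inv W T U → U = ⊥

variable {W : Submodule F V} {T : W →ₗ[F] V}

lemma inv_bot : Inv W T ⊥ := by
  intro x hx
  have : x = 0 := by
    ext; simpa using hx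
  simp [this]

lemma inv_sup {U₁ U₂ : Submodule F V} (h1 : U₁ ≤ W) (h2 : U₂ ≤ W)
    (i1 : Inv W T U₁) (i2 : Inv W T U₂) : Inv W T (U₁ ⊔ U₂) := by
  intro x hx
  rw [Submodule.mem_sup] at hx
  obtain ⟨a, ha, b, hb, hab⟩ := hx
  have hx' : x = ⟨a, h1 ha⟩ + ⟨b, h2 hb⟩ := by ext; simp [← hab]
  rw [hx', map_add]
  exact Submodule.add_mem_sup (i1 _ ha) (i2 _ hb)

/-- the largest `T`-invariant subspace of `W` -/
def core (W : Submodule F V) (T : W →ₗ[F] V) : Submodule F V :=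
  sSup {U | U ≤ W ∧ Inv W T U}

lemma core_le : core W T ≤ W := sSup_le fun _ h => h.1

lemma mem_core {z : V} : z ∈ core W T ↔ ∃ U, (U ≤ W ∧ Inv W T U) ∧ z ∈ U := by
  have hne : ({U | U ≤ W ∧ Inv W T U} : Set (Submodule F V)).Nonempty :=
    ⟨⊥, bot_le, inv_bot⟩
  have hdir : DirectedOn (· ≤ ·) {U | U ≤ W ∧ Inv W T U} := by
    rintro U₁ ⟨hU₁, hi₁⟩ U₂ ⟨hU₂, hi₂⟩
    exact ⟨U₁ ⊔ U₂, ⟨sup_le hU₁ hU₂, inv_sup hU₁ hU₂ hi₁ hi₂⟩, le_sup_left, le_sup_right⟩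
  rw [core, Submodule.mem_sSup_of_directed hne hdir]
  simp only [Set.mem_setOf_eq]

lemma inv_core : Inv W T (core W T) := by
  intro x hx
  obtain ⟨U, ⟨hUW, hi⟩, hxU⟩ := mem_core.mp hx
  have hmem : U ∈ {U | U ≤ W ∧ Inv W T U} := ⟨hUW, hi⟩
  exact le_sSup (α := Submodule F V) hmem (hi x hxU)

lemma le_core {U : Submodule F V} (hU : U ≤ W) (hi : Inv W T U) : U ≤ core W T := by
  have hmem : U ∈ {U | U ≤ W ∧ Inv W T U} := ⟨hU, hi⟩
  exact le_sSup hmem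

lemma simp_iff_core : Simp W T ↔ core W T = ⊥ := by
  constructor
  · intro h; exact h _ core_le inv_core
  · intro h U hU hi
    exact le_bot_iff.mp (h ▸ le_core hU hi)

section Split

variable (W W₀ : Submodule F V) (φ : W →ₗ[F] F) (w : W)

/-- projection onto `W₀` along `w` -/
def piz (hker : ∀ u : W, (u : V) ∈ W₀ ↔ φ u = 0) (hφw : φ w = 1) : W →ₗ[F] W₀ :=
  LinearMap.codRestrict W₀ (W.subtype - φ.smulRight (w : V)) (fun u => by
    have h : (u : V) - φ u • (w : V) = ((u - φ u • w : W) : V) := by push_cast; module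
    simp only [LinearMap.sub_apply, LinearMap.smulRight_apply, Submodule.subtype_apply, h]
    rw [hker]
    simp [hφw])

variable {W W₀ φ w}

lemma piz_coe (hker : ∀ u : W, (u : V) ∈ W₀ ↔ φ u = 0) (hφw : φ w = 1) (u : W) :
    (piz W W₀ φ w hker hφw u : V) = (u : V) - φ u • (w : V) := rfl

/-- extension of `S : W₀ → V` to `W` sending `w` to `x` -/
def ext (hker : ∀ u : W, (u : V) ∈ W₀ ↔ φ u = 0) (hφw : φ w = 1)
    (S : W₀ →ₗ[F] V) (x : V) : W →ₗ[F] V :=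
  S.comp (piz W W₀ φ w hker hφw) + φ.smulRight x

/-- restriction of `T : W → V` to `W₀` -/
def rest (hle : W₀ ≤ W) (T : W →ₗ[F] V) : W₀ →ₗ[F] V := T.comp (Submodule.inclusion hle)

/-- `U` is a maximal `S`-quasi-invariant subspace of `W'` meeting the complement of `W₀'`. -/
structure Sat (W' : Submodule F V) (φ' : W' →ₗ[F] F) {W₀' : Submodule F V}
    (S : W₀' →ₗ[F] V) (U : Submodule F V) : Prop where
  le : U ≤ W'
  inv : Inv W₀' S U
  witness : ∃ v : W', (v : V) ∈ U ∧ φ' v = 1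
  max : ∀ U', U ≤ U' → U' ≤ W' → Inv W₀' S U' → U' = U

section
variable (hker : ∀ u : W, (u : V) ∈ W₀ ↔ φ u = 0) (hφw : φ w = 1) (hle : W₀ ≤ W)

lemma ext_apply (S : W₀ →ₗ[F] V) (x : V) (u : W) :
    ext hker hφw S x u = S (piz W W₀ φ w hker hφw u) + φ u • x := rfl

lemma rest_apply (T : W →ₗ[F] V) (y : W₀) :
    rest hle T y = T (Submodule.inclusion hle y) := rfl

include hker in
lemma phi_incl (y : W₀) : φ (Submodule.inclusion hle y) = 0 :=
  (hker _).mp (by simp)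

lemma piz_incl (y : W₀) : piz W W₀ φ w hker hφw (Submodule.inclusion hle y) = y := by
  ext
  rw [piz_coe hker hφw, phi_incl hker hle]
  simp

lemma ext_incl (S : W₀ →ₗ[F] V) (x : V) (y : W₀) :
    ext hker hφw S x (Submodule.inclusion hle y) = S y := by
  rw [ext_apply, piz_incl hker hφw hle, phi_incl hker hle]
  simp

lemma rest_ext (S : W₀ →ₗ[F] V) (x : V) :
    rest hle (ext hker hφw S x) = S := by
  ext y
  rw [rest_apply, ext_incl hker hφw hle]

lemma piz_w : piz W W₀ φ w hker hφw w = 0 := by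
  ext
  rw [piz_coe hker hφw, hφw]
  simp

lemma ext_w (S : W₀ →ₗ[F] V) (x : V) : ext hker hφw S x w = x := by
  rw [ext_apply, piz_w hker hφw, hφw]
  simp

lemma incl_piz_add (u : W) :
    Submodule.inclusion hle (piz W W₀ φ w hker hφw u) + φ u • w = u := by
  ext
  simp only [Submodule.coe_add, SetLike.val_smul, Submodule.coe_inclusion]
  rw [piz_coe hker hφw]
  module

lemma ext_rest (T : W →ₗ[F] V) :
    ext hker hφw (rest hle T) (T w) = T := by
  ext u
  conv_rhs => rw [← incl_piz_add hker hφw hle u]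
  rw [map_add, map_smul, ext_apply, rest_apply]

include hker in
/-- the `W₀`-part of the decomposition of `u : W` along a vector `v` with `φ v = 1` -/
lemma sub_part_mem (v u : W) (hφv : φ v = 1) : ((u - φ u • v : W) : V) ∈ W₀ :=
  (hker _).mpr (by rw [map_sub, map_smul]; simp [hφv])

include hker hle in
/-- closure of quasi-invariance under sums, given a common `φ`-unit vector -/
lemma invS_sup (S : W₀ →ₗ[F] V) {U₁ U₂ : Submodule F V} (h1 : U₁ ≤ W) (h2 : U₂ ≤ W)
    (i1 : Inv W₀ S U₁) (i2 : Inv W₀ S U₂) (v : W) (hv1 : (v : V) ∈ U₁)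
    (hv2 : (v : V) ∈ U₂) (hφv : φ v = 1) : Inv W₀ S (U₁ ⊔ U₂) := by
  intro y hy
  rw [Submodule.mem_sup] at hy
  obtain ⟨a, ha, b, hb, hab⟩ := hy
  set c : F := φ ⟨a, h1 ha⟩ with hc
  -- the two pieces
  have ha₀W : a - c • (v : V) ∈ W := sub_mem (h1 ha) (Submodule.smul_mem _ _ v.2)
  have hb'W : b + c • (v : V) ∈ W := add_mem (h2 hb) (Submodule.smul_mem _ _ v.2)
  have e1 : (⟨a - c • (v : V), ha₀W⟩ : W) = ⟨a, h1 ha⟩ - c • v := by ext; push_cast; module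
  have e2 : (⟨b + c • (v : V), hb'W⟩ : W) = ⟨b, h2 hb⟩ + c • v := by ext; push_cast; module
  have e3 : Submodule.inclusion hle y = (⟨a, h1 ha⟩ : W) + ⟨b, h2 hb⟩ := by
    ext
    simp only [Submodule.coe_add, Submodule.coe_inclusion]
    exact hab.symm
  have hφb : φ (⟨b, h2 hb⟩ : W) = -c := by
    have h0 : φ (Submodule.inclusion hle y) = 0 := phi_incl hker hle y
    rw [e3, map_add, ← hc] at h0
    linear_combination h0
  have ha₀W₀ : a - c • (v : V) ∈ W₀ := by
    rw [hker ⟨a - c • (v : V), ha₀W⟩, e1, map_sub, map_smul, ← hc, hφv]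
    simp
  have hb'W₀ : b + c • (v : V) ∈ W₀ := by
    rw [hker ⟨b + c • (v : V), hb'W⟩, e2, map_add, map_smul, hφb, hφv]
    simp
  have ha₀U : a - c • (v : V) ∈ U₁ := sub_mem ha (Submodule.smul_mem _ _ hv1)
  have hb'U : b + c • (v : V) ∈ U₂ := add_mem hb (Submodule.smul_mem _ _ hv2)
  have hy' : y = (⟨a - c • (v : V), ha₀W₀⟩ : W₀) + ⟨b + c • (v : V), hb'W₀⟩ := by
    ext
    push_cast
    rw [← hab]
    module
  rw [hy', map_add]
  exact Submodule.add_mem_sup (i1 _ ha₀U) (i2 _ hb'U)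

end

section Core

variable (hker : ∀ u : W, (u : V) ∈ W₀ ↔ φ u = 0) (hφw : φ w = 1) (hle : W₀ ≤ W)

/-- the largest `S`-quasi-invariant subspace of `W` containing a given vector `v` -/
def usat (S : W₀ →ₗ[F] V) (v : W) : Submodule F V :=
  sSup {U | U ≤ W ∧ Inv W₀ S U ∧ (v : V) ∈ U}

include hker in
lemma span_mem_usatSet (S : W₀ →ₗ[F] V) (v : W) (hφv : φ v = 1) :
    Submodule.span F {(v : V)} ∈ {U | U ≤ W ∧ Inv W₀ S U ∧ (v : V) ∈ U} := by
  refine ⟨(Submodule.span_singleton_le_iff_mem _ _).mpr v.2, ?_,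
    Submodule.mem_span_singleton_self _⟩
  intro y hy
  rw [Submodule.mem_span_singleton] at hy
  obtain ⟨c, hc⟩ := hy
  have hcv : ((c • v : W) : V) ∈ W₀ := by
    have : ((c • v : W) : V) = (y : V) := by push_cast; rw [hc]
    rw [this]; exact y.2
  have hc0 : c = 0 := by
    have := (hker _).mp hcv
    rw [map_smul, hφv, smul_eq_mul, mul_one] at this
    exact this
  have hy0 : y = 0 := by ext; rw [← hc, hc0]; simp
  rw [hy0, map_zero]
  exact Submodule.zero_mem _

include hker hle in
lemma usat_sat (S : W₀ →ₗ[F] V) (v : W) (hφv : φ v = 1) :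
    Sat W φ S (usat S v) ∧ (v : V) ∈ usat S v := by
  have hne : {U | U ≤ W ∧ Inv W₀ S U ∧ (v : V) ∈ U}.Nonempty :=
    ⟨_, span_mem_usatSet hker S v hφv⟩
  have hdir : DirectedOn (· ≤ ·) {U | U ≤ W ∧ Inv W₀ S U ∧ (v : V) ∈ U} := by
    rintro U₁ ⟨hU₁, hi₁, hv₁⟩ U₂ ⟨hU₂, hi₂, hv₂⟩
    exact ⟨U₁ ⊔ U₂, ⟨sup_le hU₁ hU₂, invS_sup hker hle S hU₁ hU₂ hi₁ hi₂ v hv₁ hv₂ hφv,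
      Submodule.mem_sup_left hv₁⟩, le_sup_left, le_sup_right⟩
  have hmemv : (v : V) ∈ usat S v :=
    le_sSup (span_mem_usatSet hker S v hφv) (Submodule.mem_span_singleton_self _)
  have husatle : usat S v ≤ W := sSup_le fun _ h => h.1
  have husatinv : Inv W₀ S (usat S v) := by
    intro y hy
    rw [usat, Submodule.mem_sSup_of_directed hne hdir] at hy
    obtain ⟨U, hU, hyU⟩ := hy
    exact le_sSup hU (hU.2.1 y hyU)
  refine ⟨⟨husatle, husatinv, ⟨v, hmemv, hφv⟩, ?_⟩, hmemv⟩
  intro U' hge hle' hinv'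
  have hU'mem : U' ∈ {U | U ≤ W ∧ Inv W₀ S U ∧ (v : V) ∈ U} := ⟨hle', hinv', hge hmemv⟩
  exact le_antisymm (le_sSup hU'mem) hge

include hker hle in
lemma sat_eq_usat {S : W₀ →ₗ[F] V} {U : Submodule F V} (hU : Sat W φ S U) (v : W)
    (hv : (v : V) ∈ U) (hφv : φ v = 1) : U = usat S v := by
  have hle' : U ≤ usat S v := le_sSup (show U ∈ _ from ⟨hU.le, hU.inv, hv⟩)
  have h := usat_sat hker hle S v hφv
  exact (hU.max (usat S v) hle' h.1.le h.1.inv).symm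

lemma inv_rest {T : W →ₗ[F] V} {U : Submodule F V} (hinv : Inv W T U) :
    Inv W₀ (rest hle T) U := by
  intro y hy
  rw [rest_apply]
  exact hinv (Submodule.inclusion hle y) (by simpa using hy)

include hle in
lemma inv_ext_invS {S : W₀ →ₗ[F] V} {x : V} {U : Submodule F V}
    (hinv : Inv W (ext hker hφw S x) U) : Inv W₀ S U := by
  have h := inv_rest hle hinv
  rwa [rest_ext hker hφw hle] at h

include hle in
lemma core_sat {S : W₀ →ₗ[F] V} (hS : Simp W₀ S) (x : V)
    (hns : ¬ Simp W (ext hker hφw S x)) :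
    Sat W φ S (core W (ext hker hφw S x)) := by
  have hCle : core W (ext hker hφw S x) ≤ W := core_le
  have hCinv : Inv W (ext hker hφw S x) (core W (ext hker hφw S x)) := inv_core
  have hCS : Inv W₀ S (core W (ext hker hφw S x)) := inv_ext_invS hker hφw hle hCinv
  have hCbot : core W (ext hker hφw S x) ≠ ⊥ := fun h => hns (simp_iff_core.mpr h)
  have hnotle : ¬ core W (ext hker hφw S x) ≤ W₀ := fun hCW₀ => hCbot (hS _ hCW₀ hCS)
  obtain ⟨cv, hcvC, hcvW₀⟩ := SetLike.not_le_iff_exists.mp hnotle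
  have hcW : cv ∈ W := hCle hcvC
  have hφc : φ ⟨cv, hcW⟩ ≠ 0 := fun h => hcvW₀ ((hker ⟨cv, hcW⟩).mpr h)
  set v : W := (φ ⟨cv, hcW⟩)⁻¹ • ⟨cv, hcW⟩ with hv
  have hφv : φ v = 1 := by rw [hv, map_smul, smul_eq_mul, inv_mul_cancel₀ hφc]
  have hvC : (v : V) ∈ core W (ext hker hφw S x) := by
    rw [hv]
    simp only [SetLike.val_smul]
    exact Submodule.smul_mem _ _ hcvC
  refine ⟨hCle, hCS, ⟨v, hvC, hφv⟩, ?_⟩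
  intro U' hge hle' hinv'
  have hTinv : Inv W (ext hker hφw S x) U' := by
    intro u hu
    have hu₀W₀ : ((u - φ u • v : W) : V) ∈ W₀ := sub_part_mem hker v u hφv
    have hu₀U' : ((u - φ u • v : W) : V) ∈ U' := by
      push_cast
      exact sub_mem hu (Submodule.smul_mem _ _ (hge hvC))
    have hdecomp : u = Submodule.inclusion hle (⟨_, hu₀W₀⟩ : W₀) + φ u • v := by
      ext
      simp only [Submodule.coe_add, SetLike.val_smul, Submodule.coe_inclusion]
      push_cast
      module
    rw [hdecomp, map_add, map_smul, ext_incl hker hφw hle]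
    exact add_mem (hinv' _ hu₀U') (Submodule.smul_mem _ _ (hge (hCinv v hvC)))
  exact le_antisymm (le_core hle' hTinv) hge

include hle in
lemma core_eq_of_sat {S : W₀ →ₗ[F] V} {x : V} {U : Submodule F V} (hU : Sat W φ S U)
    (hinv : Inv W (ext hker hφw S x) U) : core W (ext hker hφw S x) = U := by
  refine le_antisymm ?_ (le_core hU.le hinv)
  have hsup : Inv W (ext hker hφw S x) (U ⊔ core W (ext hker hφw S x)) :=
    inv_sup hU.le core_le hinv inv_core
  have hS' : Inv W₀ S (U ⊔ core W (ext hker hφw S x)) := inv_ext_invS hker hφw hle hsup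
  have heq := hU.max _ le_sup_left (sup_le hU.le core_le) hS'
  calc core W (ext hker hφw S x) ≤ U ⊔ core W (ext hker hφw S x) := le_sup_right
  _ = U := heq

include hle in
lemma inv_ext_iff {S : W₀ →ₗ[F] V} {U : Submodule F V} (hU : Sat W φ S U) (v : W)
    (hv : (v : V) ∈ U) (hφv : φ v = 1) (x : V) :
    Inv W (ext hker hφw S x) U ↔ x + S (piz W W₀ φ w hker hφw v) ∈ U := by
  constructor
  · intro h
    have := h v hv
    rw [ext_apply, hφv, one_smul] at this
    rwa [add_comm] at this
  · intro hx u hu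
    have hu₀W₀ : ((u - φ u • v : W) : V) ∈ W₀ := sub_part_mem hker v u hφv
    have hu₀U : ((u - φ u • v : W) : V) ∈ U := by
      push_cast
      exact sub_mem hu (Submodule.smul_mem _ _ hv)
    have hdecomp : u = Submodule.inclusion hle (⟨_, hu₀W₀⟩ : W₀) + φ u • v := by
      ext
      simp only [Submodule.coe_add, SetLike.val_smul, Submodule.coe_inclusion]
      push_cast
      module
    rw [hdecomp, map_add, map_smul, ext_incl hker hφw hle]
    refine add_mem (hU.inv _ hu₀U) (Submodule.smul_mem _ _ ?_)
    rw [ext_apply, hφv, one_smul]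
    rwa [add_comm] at hx

lemma simp_rest {T : W →ₗ[F] V} (hT : Simp W T) : Simp W₀ (rest hle T) := by
  intro U hUle hUinv
  refine hT U (hUle.trans hle) ?_
  intro x hx
  have hxW₀ : (x : V) ∈ W₀ := hUle hx
  have hxe : x = Submodule.inclusion hle ⟨(x : V), hxW₀⟩ := by ext; rfl
  rw [hxe, ← rest_apply hle]
  exact hUinv _ hx

include hle in
lemma simp_ext_rest {S : W₀ →ₗ[F] V} {x : V} (h : Simp W (ext hker hφw S x)) :
    Simp W₀ S := by
  have h2 := simp_rest hle h
  rwa [rest_ext hker hφw hle] at h2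

/-- a chosen `φ`-unit vector of a saturated subspace -/
noncomputable def satV {S : W₀ →ₗ[F] V} {U : Submodule F V} (hU : Sat W φ S U) : W :=
  hU.witness.choose

lemma satV_mem {S : W₀ →ₗ[F] V} {U : Submodule F V} (hU : Sat W φ S U) :
    ((satV hU : W) : V) ∈ U := hU.witness.choose_spec.1

lemma satV_phi {S : W₀ →ₗ[F] V} {U : Submodule F V} (hU : Sat W φ S U) :
    φ (satV hU) = 1 := hU.witness.choose_spec.2

lemma sat_ne_bot {S : W₀ →ₗ[F] V} {U : Submodule F V} (hU : Sat W φ S U) : U ≠ ⊥ := by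
  intro h
  obtain ⟨v, hv, hφv⟩ := hU.witness
  rw [h, Submodule.mem_bot] at hv
  have hz : v = 0 := by ext; exact hv
  rw [hz, map_zero] at hφv
  exact one_ne_zero hφv.symm

/-- the bad set fibered over saturated subspaces -/
noncomputable def equivA (S : W₀ →ₗ[F] V) (hS : Simp W₀ S) :
    {x : V // ¬ Simp W (ext hker hφw S x)} ≃
      Σ U : {U : Submodule F V // Sat W φ S U},
        {x : V // Inv W (ext hker hφw S x) U.1} where
  toFun x := ⟨⟨core W (ext hker hφw S x.1), core_sat hker hφw hle hS x.1 x.2⟩, x.1, inv_core⟩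
  invFun p := ⟨p.2.1, fun hsimp => sat_ne_bot p.1.2 (hsimp p.1.1 p.1.2.le p.2.2)⟩
  left_inv x := Subtype.ext rfl
  right_inv p := by
    obtain ⟨⟨U, hU⟩, x, hx⟩ := p
    have h : core W (ext hker hφw S x) = U := core_eq_of_sat hker hφw hle hU hx
    subst h
    rfl

/-- each fiber of the bad set is a coset of `U` -/
noncomputable def equivB (S : W₀ →ₗ[F] V) (U : Submodule F V) (hU : Sat W φ S U) :
    {x : V // Inv W (ext hker hφw S x) U} ≃ U where
  toFun x := ⟨x.1 + S (piz W W₀ φ w hker hφw (satV hU)),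
    (inv_ext_iff hker hφw hle hU (satV hU) (satV_mem hU) (satV_phi hU) x.1).mp x.2⟩
  invFun z := ⟨z.1 - S (piz W W₀ φ w hker hφw (satV hU)),
    (inv_ext_iff hker hφw hle hU (satV hU) (satV_mem hU) (satV_phi hU) _).mpr (by
      have h : z.1 - S (piz W W₀ φ w hker hφw (satV hU)) +
          S (piz W W₀ φ w hker hφw (satV hU)) = z.1 := by module
      rw [h]
      exact z.2)⟩
  left_inv x := Subtype.ext (by module)
  right_inv z := Subtype.ext (by module)

/-- splitting `U` along its unit vector -/
noncomputable def equivC (S : W₀ →ₗ[F] V) (U : Submodule F V) (hU : Sat W φ S U) :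
    U ≃ ↥(U ⊓ W₀) × F where
  toFun u := ⟨⟨u.1 - φ ⟨u.1, hU.le u.2⟩ • ((satV hU : W) : V),
      Submodule.mem_inf.mpr ⟨sub_mem u.2 (Submodule.smul_mem _ _ (satV_mem hU)), by
        have h : u.1 - φ ⟨u.1, hU.le u.2⟩ • ((satV hU : W) : V) =
            (((⟨u.1, hU.le u.2⟩ : W) - φ ⟨u.1, hU.le u.2⟩ • satV hU : W) : V) := by
          push_cast; module
        rw [h]
        exact sub_part_mem hker (satV hU) _ (satV_phi hU)⟩⟩,
    φ ⟨u.1, hU.le u.2⟩⟩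
  invFun p := ⟨p.1.1 + p.2 • ((satV hU : W) : V),
    add_mem (Submodule.mem_inf.mp p.1.2).1 (Submodule.smul_mem _ _ (satV_mem hU))⟩
  left_inv u := Subtype.ext (by module)
  right_inv p := by
    obtain ⟨⟨z, hz⟩, c⟩ := p
    have hzW₀ : z ∈ W₀ := (Submodule.mem_inf.mp hz).2
    have hzW : z ∈ W := hle hzW₀
    have hlift : ∀ (hm : z + c • ((satV hU : W) : V) ∈ W),
        (⟨z + c • ((satV hU : W) : V), hm⟩ : W) = ⟨z, hzW⟩ + c • satV hU := by
      intro hm; ext; push_cast; module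
    have hφz : φ (⟨z, hzW⟩ : W) = 0 := (hker _).mp hzW₀
    have hφ : ∀ (hm : z + c • ((satV hU : W) : V) ∈ W),
        φ (⟨z + c • ((satV hU : W) : V), hm⟩ : W) = c := by
      intro hm
      rw [hlift hm, map_add, map_smul, hφz, satV_phi hU]
      simp
    refine Prod.ext (Subtype.ext ?_) ?_
    · simp only
      rw [hφ]
      module
    · simp only
      rw [hφ]

/-- the lines through `w + W₀` inside `U` -/
noncomputable def equivD (S : W₀ →ₗ[F] V) (U : Submodule F V) (hU : Sat W φ S U) :
    {y : W₀ // (w : V) + (y : V) ∈ U} ≃ ↥(U ⊓ W₀) where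
  toFun y := ⟨(y.1 : V) - ((piz W W₀ φ w hker hφw (satV hU) : W₀) : V),
    Submodule.mem_inf.mpr ⟨by
      have h : (y.1 : V) - ((piz W W₀ φ w hker hφw (satV hU) : W₀) : V) =
          ((w : V) + (y.1 : V)) - ((satV hU : W) : V) := by
        rw [piz_coe hker hφw, satV_phi hU]
        module
      rw [h]
      exact sub_mem y.2 (satV_mem hU), sub_mem y.1.2 (piz W W₀ φ w hker hφw (satV hU)).2⟩⟩
  invFun z := ⟨piz W W₀ φ w hker hφw (satV hU) + ⟨z.1, (Submodule.mem_inf.mp z.2).2⟩, by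
    have h : (w : V) + ((piz W W₀ φ w hker hφw (satV hU) + ⟨z.1, (Submodule.mem_inf.mp z.2).2⟩ : W₀) : V) =
        ((satV hU : W) : V) + z.1 := by
      push_cast
      rw [piz_coe hker hφw, satV_phi hU]
      module
    rw [h]
    exact add_mem (satV_mem hU) (Submodule.mem_inf.mp z.2).1⟩
  left_inv y := Subtype.ext (Subtype.ext (by push_cast; module))
  right_inv z := Subtype.ext (by push_cast; module)

/-- `W₀` fibered over the saturated subspaces -/
noncomputable def equivE (S : W₀ →ₗ[F] V) :
    W₀ ≃ Σ U : {U : Submodule F V // Sat W φ S U}, {y : W₀ // (w : V) + (y : V) ∈ U.1} where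
  toFun y := ⟨⟨usat S (w + Submodule.inclusion hle y),
      (usat_sat hker hle S _ (by rw [map_add, hφw, phi_incl hker hle, add_zero])).1⟩,
    y, by
      have h := (usat_sat hker hle S (w + Submodule.inclusion hle y)
        (by rw [map_add, hφw, phi_incl hker hle, add_zero])).2
      simpa using h⟩
  invFun p := p.2.1
  left_inv y := rfl
  right_inv p := by
    obtain ⟨⟨U, hU⟩, y, hy⟩ := p
    have h : U = usat S (w + Submodule.inclusion hle y) := by
      refine sat_eq_usat hker hle hU (w + Submodule.inclusion hle y) ?_
        (by rw [map_add, hφw, phi_incl hker hle, add_zero])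
      simpa using hy
    subst h
    rfl

end Core

/-- generic: a subtype of a product fibered over the first coordinate -/
def subtypeProdSigma {α β : Type*} (P : α → Prop) (Q : α → β → Prop)
    (h : ∀ a b, Q a b → P a) :
    {p : α × β // Q p.1 p.2} ≃ Σ a : {a // P a}, {b // Q a.1 b} where
  toFun p := ⟨⟨p.1.1, h _ _ p.2⟩, p.1.2, p.2⟩
  invFun s := ⟨(s.1.1, s.2.1), s.2.2⟩
  left_inv p := rfl
  right_inv s := rfl

end Split

section Count

variable [Fintype F] [FiniteDimensional F V]

variable {W W₀ : Submodule F V} {φ : W →ₗ[F] F} {w : W}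
variable (hker : ∀ u : W, (u : V) ∈ W₀ ↔ φ u = 0) (hφw : φ w = 1) (hle : W₀ ≤ W)

include hker hφw hle in
lemma card_bad (S : W₀ →ₗ[F] V) (hS : Simp W₀ S) :
    Nat.card {x : V // ¬ Simp W (ext hker hφw S x)} = Nat.card W₀ * Nat.card F := by
  have e1 := equivA hker hφw hle S hS
  have e2 : (Σ U : {U : Submodule F V // Sat W φ S U},
        {x : V // Inv W (ext hker hφw S x) U.1}) ≃
      Σ U : {U : Submodule F V // Sat W φ S U}, ↥(U.1 ⊓ W₀) × F :=
    Equiv.sigmaCongrRight (fun (U : {U : Submodule F V // Sat W φ S U}) =>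
      (equivB hker hφw hle S U.1 U.2).trans (equivC hker hle S U.1 U.2))
  have e3 := (Equiv.sigmaProdDistrib
    (fun U : {U : Submodule F V // Sat W φ S U} => ↥(U.1 ⊓ W₀)) F).symm
  have e4 : (Σ U : {U : Submodule F V // Sat W φ S U}, ↥(U.1 ⊓ W₀)) ≃ W₀ :=
    (Equiv.sigmaCongrRight (fun (U : {U : Submodule F V // Sat W φ S U}) =>
      (equivD hker hφw S U.1 U.2).symm)).trans
      (equivE hker hφw hle S).symm
  rw [Nat.card_congr (((e1.trans e2).trans e3).trans (Equiv.prodCongr e4 (Equiv.refl F))),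
    Nat.card_prod]

include hker hφw hle in
lemma card_good (S : W₀ →ₗ[F] V) (hS : Simp W₀ S) :
    Nat.card {x : V // Simp W (ext hker hφw S x)} =
      Nat.card V - Nat.card W₀ * Nat.card F := by
  classical
  have hfin : Finite V := Module.finite_of_finite F
  letI : Fintype V := Fintype.ofFinite V
  have hsum : Nat.card {x : V // Simp W (ext hker hφw S x)} +
      Nat.card {x : V // ¬ Simp W (ext hker hφw S x)} = Nat.card V := by
    simp only [Nat.card_eq_fintype_card]
    rw [Fintype.card_subtype_compl]
    have hle' := Fintype.card_subtype_le (fun x : V => Simp W (ext hker hφw S x))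
    omega
  rw [card_bad hker hφw hle S hS] at hsum
  omega

omit hker hφw hle

lemma card_simp (k : ℕ) : ∀ (W : Submodule F V), finrank F W = k →
    Nat.card {T : W →ₗ[F] V // Simp W T} =
      ∏ i ∈ Finset.Icc 1 k, (Nat.card F ^ finrank F V - Nat.card F ^ i) := by
  induction k with
  | zero =>
    intro W hW
    have hWbot : W = ⊥ := Submodule.finrank_eq_zero.mp hW
    subst hWbot
    have hall : ∀ T : (⊥ : Submodule F V) →ₗ[F] V, Simp ⊥ T := by
      intro T U hU _
      exact le_bot_iff.mp hU
    haveI : Subsingleton ((⊥ : Submodule F V) →ₗ[F] V) := by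
      constructor
      intro T T'
      ext x
      have hx : x = 0 := Subsingleton.elim x 0
      rw [hx, map_zero, map_zero]
    haveI : Unique {T : (⊥ : Submodule F V) →ₗ[F] V // Simp ⊥ T} :=
      uniqueOfSubsingleton ⟨0, hall 0⟩
    rw [Nat.card_unique]
    simp
  | succ k ih =>
    intro W hW
    classical
    have hfinV : Finite V := Module.finite_of_finite F
    letI : Fintype V := Fintype.ofFinite V
    -- choose a basis of W and split off the last coordinate
    let b : Basis (Fin (k + 1)) F W := Module.finBasisOfFinrankEq F W hW
    set φ : W →ₗ[F] F := b.coord (Fin.last k) with hφ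
    set w : W := b (Fin.last k) with hwdef
    have hφw : φ w = 1 := by
      rw [hφ, hwdef, Basis.coord_apply, Basis.repr_self]
      simp
    set W₀ : Submodule F V := (LinearMap.ker φ).map W.subtype with hW₀
    have hle : W₀ ≤ W := Submodule.map_subtype_le _ _
    have hker : ∀ u : W, (u : V) ∈ W₀ ↔ φ u = 0 := by
      intro u
      constructor
      · intro hu
        rw [hW₀, Submodule.mem_map] at hu
        obtain ⟨y, hy, hyu⟩ := hu
        have hyu' : y = u := Subtype.ext (by simpa using hyu)
        rw [← hyu']
        exact hy
      · intro hu
        exact ⟨u, hu, rfl⟩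
    have hrk : finrank F W₀ = k := by
      rw [hW₀, Submodule.finrank_map_subtype_eq]
      have hr := LinearMap.finrank_range_add_finrank_ker φ
      have hsurj : LinearMap.range φ = ⊤ :=
        LinearMap.range_eq_top.mpr (fun c => ⟨c • w, by rw [map_smul, hφw, smul_eq_mul, mul_one]⟩)
      rw [hsurj, finrank_top, finrank_self, hW] at hr
      omega
    -- the full space of simple maps, fibered over simple maps on W₀
    have esub : {T : W →ₗ[F] V // Simp W T} ≃
        {p : (W₀ →ₗ[F] V) × V // Simp W (ext hker hφw p.1 p.2)} :=
      Equiv.subtypeEquiv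
        (⟨fun T => (rest hle T, T w), fun p => ext hker hφw p.1 p.2,
          ext_rest hker hφw hle, fun p => Prod.ext (rest_ext hker hφw hle p.1 p.2)
            (ext_w hker hφw p.1 p.2)⟩ : (W →ₗ[F] V) ≃ (W₀ →ₗ[F] V) × V)
        (fun T => by
          simp only [Equiv.coe_fn_mk]
          rw [ext_rest hker hφw hle])
    have esig := esub.trans (subtypeProdSigma (fun S => Simp W₀ S)
      (fun S x => Simp W (ext hker hφw S x)) (fun S x h => simp_ext_rest hker hφw hle h))
    rw [Nat.card_congr esig]
    -- count the sigma type
    haveI : Finite (W₀ →ₗ[F] V) :=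
      Finite.of_injective (fun T => (T : W₀ → V)) DFunLike.coe_injective
    letI : Fintype {S : W₀ →ₗ[F] V // Simp W₀ S} := Fintype.ofFinite _
    letI : ∀ S : {S : W₀ →ₗ[F] V // Simp W₀ S},
        Fintype {x : V // Simp W (ext hker hφw S.1 x)} := fun S => Fintype.ofFinite _
    rw [Nat.card_eq_fintype_card, Fintype.card_sigma]
    have hconst : ∀ S : {S : W₀ →ₗ[F] V // Simp W₀ S},
        Fintype.card {x : V // Simp W (ext hker hφw S.1 x)} =
          Nat.card F ^ finrank F V - Nat.card F ^ (k + 1) := by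
      intro S
      have hg := card_good hker hφw hle S.1 S.2
      rw [Nat.card_eq_fintype_card] at hg
      rw [hg]
      congr 1
      · rw [Nat.card_eq_fintype_card, Nat.card_eq_fintype_card,
          card_eq_pow_finrank (K := F) (V := V)]
      · have hcW₀ : Nat.card W₀ = Nat.card F ^ k := by
          letI : Fintype W₀ := Fintype.ofFinite _
          rw [Nat.card_eq_fintype_card, Nat.card_eq_fintype_card,
            card_eq_pow_finrank (K := F) (V := W₀), hrk]
        rw [hcW₀, pow_succ]
    rw [Finset.sum_congr rfl (fun S _ => hconst S), Finset.sum_const, smul_eq_mul,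
      Finset.card_univ, ← Nat.card_eq_fintype_card, ih W₀ hrk,
      Finset.prod_Icc_succ_top (Nat.le_add_left 1 k)]

end Count

end SimpleCount

theorem number_of_simple_maps {F V : Type*} [Field F] [Fintype F]
    [AddCommGroup V] [Module F V] [FiniteDimensional F V]
    (q n k : ℕ) (hq : Fintype.card F = q)
    (hn : Module.finrank F V = n) (W : Submodule F V)
    (hW : Module.finrank F W = k) (hkn : k < n) :
    Nat.card {T : W →ₗ[F] V // IsSimple W T} =
      ∏ i ∈ Finset.Icc 1 k, (q ^ n - q ^ i) := by
  have hWne : W ≠ ⊤ := by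
    intro h
    rw [h, finrank_top] at hW
    omega
  have hiff : ∀ T : W →ₗ[F] V, IsSimple W T ↔ SimpleCount.Simp W T := by
    intro T
    constructor
    · intro h U hle hinv
      exact h U hle hinv (fun htop => hWne (top_unique (htop ▸ hle)))
    · intro h U hle hinv _
      exact h U hle hinv
  rw [Nat.card_congr (Equiv.subtypeEquivRight hiff), SimpleCount.card_simp k W hW]
  rw [Nat.card_eq_fintype_card, hq, hn]
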